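/- Let G be a finite connected graph with n vertices and m edges, Γ a finite group, α: D(G) → Γ an ordinary voltage assignment, and ρ a unitary representation of Γ of degree d. With H, h, γ, Γ_u, w, x as in the Gnutzmann–Smilansky setup, define H_g by (H_g)_{uv} = h_{uv}·e^{2iγ_{uv}} if (u,v) ∈ D(G) and α(u,v) = g, else 0; and U_g by (U_g)_{ef} = σ^{(t(e))}_{ef} if t(e)=o(f) and α(e)=g, else 0. Then det(I_{2md} - Σ_{g∈Γ} ρ(g) ⊗ U_g) = [(-1)^{nd}·2^{md} / ∏_{u} (H_{uu} - λ - i·Γ_u)^d]·det(λ·I_{nd} - Σ_{g∈Γ} ρ(g) ⊗ H_g - I_d ⊗ diag(H)). -/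

import Mathlib

open Matrix Kronecker

/-- Determinant formula for the L-function: with the Gnutzmann–Smilansky setup,
a voltage assignment α : D(G) → Γ and a unitary representation ρ of degree d,
det(I_{2md} - Σ_g ρ(g) ⊗ U_g)
  = (-1)^{nd}·2^{md}/∏_u (H_{uu} - λ - iΓ_u)^d ·
    det(λI_{nd} - Σ_g ρ(g) ⊗ H_g - I_d ⊗ diag(H)). -/
theorem L_function_determinant
    (V A : Type*) [Fintype V] [Fintype A] [DecidableEq V] [DecidableEq A]
    (n m : ℕ) (hn : Fintype.card V = n) (hm : Fintype.card A = 2 * m)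
    (o t : A → V) (einv : A → A)
    (hinvol : ∀ e, einv (einv e) = e)
    (ho : ∀ e, o (einv e) = t e)
    (hloop : ∀ e, o e ≠ t e)
    (hconn : ∀ u v : V, Relation.ReflTransGen (fun a b => ∃ e, o e = a ∧ t e = b) u v)
    (Γ : Type*) [Group Γ] [Fintype Γ] [DecidableEq Γ]
    (α : A → Γ) (hα : ∀ e, α (einv e) = (α e)⁻¹)
    (d : ℕ) (ρ : Γ → Matrix (Fin d) (Fin d) ℂ)
    (hρ1 : ρ 1 = 1) (hρmul : ∀ g g', ρ (g * g') = ρ g * ρ g')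
    (hunitary : ∀ g, (ρ g)ᴴ * ρ g = 1)
    (h γ : A → ℝ) (hpos : ∀ e, 0 ≤ h e)
    (hh : ∀ e, h (einv e) = h e) (hγ : ∀ e, γ (einv e) = -γ e)
    (w : A → ℂ) (hw : ∀ e, w e = Real.sqrt (h e) * Complex.exp (Complex.I * γ e))
    (H : Matrix V V ℂ)
    (hHoff : ∀ u v, u ≠ v → H u v =
      ∑ f ∈ Finset.univ.filter (fun f => o f = u ∧ t f = v),
        (h f : ℂ) * Complex.exp (2 * Complex.I * γ f))
    (hHdiag : ∀ u, (H u u).im = 0)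
    (Hg : Γ → Matrix V V ℂ)
    (hHg : ∀ g u v, Hg g u v =
      ∑ f ∈ Finset.univ.filter (fun f => o f = u ∧ t f = v ∧ α f = g),
        (h f : ℂ) * Complex.exp (2 * Complex.I * γ f))
    (Gam : V → ℝ)
    (hGam : ∀ u, Gam u = ∑ e ∈ Finset.univ.filter (fun e => o e = u), h e)
    (lam : ℂ)
    (hne : ∀ u, H u u - lam - Complex.I * Gam u ≠ 0)
    (x : V → ℂ) (hx : ∀ u, x u = 2 / (H u u - lam - Complex.I * Gam u))
    (Ug : Γ → Matrix A A ℂ)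
    (hUg : ∀ g e f, Ug g e f = if t e = o f ∧ α e = g then
      (if f = einv e then Complex.I else 0) - x (t e) * w e * w f else 0) :
    (1 - ∑ g : Γ, ρ g ⊗ₖ Ug g).det =
      (-1 : ℂ) ^ (n * d) * 2 ^ (m * d) /
          (∏ u : V, (H u u - lam - Complex.I * Gam u)) ^ d *
        (lam • (1 : Matrix (Fin d × V) (Fin d × V) ℂ) -
          (∑ g : Γ, ρ g ⊗ₖ Hg g) -
          (1 : Matrix (Fin d) (Fin d) ℂ) ⊗ₖ Matrix.diagonal (fun u => H u u)).det := by
  classical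
  -- basic consequences of the axioms
  have heinv_ne : ∀ e, einv e ≠ e := by
    intro e hEq
    exact hloop e (by rw [← ho e, hEq])
  have ht_einv : ∀ e, t (einv e) = o e := by
    intro e; have := ho (einv e); rw [hinvol] at this; exact this.symm
  have hρinv : ∀ g : Γ, ρ g * ρ g⁻¹ = 1 := by
    intro g; rw [← hρmul, mul_inv_cancel, hρ1]
  have hρinv' : ∀ g : Γ, ρ g⁻¹ * ρ g = 1 := by
    intro g; rw [← hρmul, inv_mul_cancel, hρ1]
  have hsq : (∀ e, (Real.sqrt (h e) : ℂ) * (Real.sqrt (h e) : ℂ) = (h e : ℂ)) := by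
    intro e; rw [← Complex.ofReal_mul, Real.mul_self_sqrt (hpos e)]
  have hww : ∀ e, w e * w (einv e) = (h e : ℂ) := by
    intro e
    rw [hw, hw, hh, hγ, mul_mul_mul_comm, hsq, ← Complex.exp_add]
    rw [show Complex.I * (γ e : ℝ) + Complex.I * ((-γ e : ℝ) : ℂ) = 0 by push_cast; ring]
    rw [Complex.exp_zero, mul_one]
  have hww2 : ∀ e, w e * w e = (h e : ℂ) * Complex.exp (2 * Complex.I * γ e) := by
    intro e
    rw [hw, mul_mul_mul_comm, hsq, ← Complex.exp_add]
    rw [show Complex.I * (γ e : ℝ) + Complex.I * (γ e : ℝ) = 2 * Complex.I * (γ e : ℝ) by ring]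
  -- the three auxiliary matrices
  set P : Matrix (Fin d × A) (Fin d × A) ℂ :=
    Matrix.of (fun p q => if q.2 = einv p.2 then Complex.I * ρ (α p.2) p.1 q.1 else 0)
    with hPdef
  set L : Matrix (Fin d × A) (Fin d × V) ℂ :=
    Matrix.of (fun p q => if t p.2 = q.2 then ρ (α p.2) p.1 q.1 * w p.2 * x q.2 else 0)
    with hLdef
  set R : Matrix (Fin d × V) (Fin d × A) ℂ :=
    Matrix.of (fun p q => if p.1 = q.1 then (if o q.2 = p.2 then w q.2 else 0) else 0)
    with hRdef
  have hPapp : ∀ p q : Fin d × A, P p q =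
      if q.2 = einv p.2 then Complex.I * ρ (α p.2) p.1 q.1 else 0 := fun p q => rfl
  have hLapp : ∀ (p : Fin d × A) (q : Fin d × V), L p q =
      if t p.2 = q.2 then ρ (α p.2) p.1 q.1 * w p.2 * x q.2 else 0 := fun p q => rfl
  have hRapp : ∀ (p : Fin d × V) (q : Fin d × A), R p q =
      if p.1 = q.1 then (if o q.2 = p.2 then w q.2 else 0) else 0 := fun p q => rfl
  have heinv_inj : Function.Injective einv := by
    intro a b hEq; rw [← hinvol a, hEq, hinvol]
  set σA := (Fintype.equivFin A) with hσAdef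
  have key : ∀ e : A, σA e ≠ σA (einv e) := fun e hEq => heinv_ne e (σA.injective hEq.symm)
  have hdetP : (1 - P).det = 2 ^ (m * d) := by
    set Og : Type _ := {e : A // σA e < σA (einv e)} with hOgdef
    have hOO : ∀ a b : Og, a.val ≠ einv b.val := by
      rintro ⟨a, ha⟩ ⟨b, hb⟩ hEq
      simp only at hEq
      rw [hEq] at ha
      rw [hinvol] at ha
      exact absurd hb (lt_asymm ha)
    let φ : Og ⊕ Og ≃ A :=
      { toFun := Sum.elim (fun e => e.val) (fun e => einv e.val)
        invFun := fun f => if hc : σA f < σA (einv f) then Sum.inl ⟨f, hc⟩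
          else Sum.inr ⟨einv f, by
            rw [hinvol]
            exact (not_lt.1 hc).lt_of_ne fun hEq => key f hEq.symm⟩
        left_inv := by
          rintro (⟨e, he⟩ | ⟨e, he⟩) <;> dsimp only [Sum.elim_inl, Sum.elim_inr]
          · rw [dif_pos he]
          · have hneg : ¬ σA (einv e) < σA (einv (einv e)) := by
              rw [hinvol]; exact lt_asymm he
            rw [dif_neg hneg]
            congr 1
            exact Subtype.ext (hinvol e)
        right_inv := by
          intro f
          dsimp only
          by_cases hc : σA f < σA (einv f)
          · rw [dif_pos hc]; rfl
          · rw [dif_neg hc]; dsimp only [Sum.elim_inr]; exact hinvol f }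
    have hcardOg : Fintype.card Og = m := by
      have := Fintype.card_congr φ
      rw [Fintype.card_sum] at this
      omega
    let ψ : (Fin d × Og) ⊕ (Fin d × Og) ≃ (Fin d × A) :=
      (Equiv.prodSumDistrib (Fin d) Og Og).symm.trans ((Equiv.refl (Fin d)).prodCongr φ)
    have hψ1 : ∀ (i : Fin d) (e : Og), ψ (Sum.inl (i, e)) = (i, e.val) := fun i e => rfl
    have hψ2 : ∀ (i : Fin d) (e : Og), ψ (Sum.inr (i, e)) = (i, einv e.val) := fun i e => rfl
    set B : Matrix (Fin d × Og) (Fin d × Og) ℂ :=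
      Matrix.of (fun p q => if p.2 = q.2 then -Complex.I * ρ (α p.2.val) p.1 q.1 else 0)
      with hBdef
    set C : Matrix (Fin d × Og) (Fin d × Og) ℂ :=
      Matrix.of (fun p q => if p.2 = q.2 then -Complex.I * ρ ((α p.2.val)⁻¹) p.1 q.1 else 0)
      with hCdef
    have hBapp : ∀ p q : Fin d × Og, B p q =
        if p.2 = q.2 then -Complex.I * ρ (α p.2.val) p.1 q.1 else 0 := fun p q => rfl
    have hCapp : ∀ p q : Fin d × Og, C p q =
        if p.2 = q.2 then -Complex.I * ρ ((α p.2.val)⁻¹) p.1 q.1 else 0 := fun p q => rfl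
    have hblocks : (1 - P).submatrix ψ ψ = Matrix.fromBlocks 1 B C 1 := by
      ext pq rs
      rcases pq with ⟨i, e⟩ | ⟨i, e⟩ <;> rcases rs with ⟨k, f⟩ | ⟨k, f⟩ <;>
        simp only [Matrix.submatrix_apply, hψ1, hψ2, Matrix.sub_apply, hPapp, hBapp, hCapp,
          Matrix.fromBlocks_apply₁₁, Matrix.fromBlocks_apply₁₂, Matrix.fromBlocks_apply₂₁,
          Matrix.fromBlocks_apply₂₂]
      · -- inl inl : identity block
        rw [if_neg (hOO f e), sub_zero]
        simp only [Matrix.one_apply, Prod.mk.injEq]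
        by_cases hik : i = k
        · by_cases hef : e = f
          · have : (e : A) = f := congrArg Subtype.val hef
            simp [hik, hef, this]
          · have : ¬ ((e : A) = f) := fun hc => hef (Subtype.ext hc)
            simp [hik, hef, this]
        · simp [hik]
      · -- inl inr : B block
        have h1 : ((i, (e : A)) : Fin d × A) ≠ (k, einv f.val) := by
          intro hc; exact hOO e f (congrArg Prod.snd hc)
        rw [Matrix.one_apply_ne h1]
        have h2 : (einv f.val = einv (e : A)) ↔ (e = f) := by
          constructor
          · intro hc; exact (Subtype.ext (heinv_inj hc)).symm
          · intro hc; rw [hc]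
        by_cases hef : e = f
        · rw [if_pos (h2.2 hef), if_pos hef]; ring
        · rw [if_neg (fun hc => hef (h2.1 hc)), if_neg hef, sub_zero]
      · -- inr inl : C block
        have h1 : ((i, einv (e : A)) : Fin d × A) ≠ (k, f.val) := by
          intro hc; exact hOO f e (congrArg Prod.snd hc).symm
        rw [Matrix.one_apply_ne h1]
        have h2 : ((f : A) = einv (einv (e : A))) ↔ (e = f) := by
          rw [hinvol]
          constructor
          · intro hc; exact Subtype.ext hc.symm
          · intro hc; rw [hc]
        by_cases hef : e = f
        · rw [if_pos (h2.2 hef), if_pos hef, hα]; ring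
        · rw [if_neg (fun hc => hef (h2.1 hc)), if_neg hef, sub_zero]
      · -- inr inr : identity block
        have h3 : (einv (f : A)) ≠ einv (einv (e : A)) := by
          rw [hinvol]; intro hc; exact hOO e f hc.symm
        rw [if_neg h3, sub_zero]
        simp only [Matrix.one_apply, Prod.mk.injEq]
        have h4 : (einv (e : A) = einv (f : A)) ↔ e = f :=
          ⟨fun hc => Subtype.ext (heinv_inj hc), fun hc => by rw [hc]⟩
        by_cases hik : i = k
        · by_cases hef : e = f
          · simp [hik, hef, h4.2 hef]
          · have : ¬ (einv (e : A) = einv (f : A)) := fun hc => hef (h4.1 hc)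
            simp [hik, hef, this]
        · simp [hik]
    have hCB : (1 : Matrix (Fin d × Og) (Fin d × Og) ℂ) - C * B = (2 : ℂ) • 1 := by
      have hCBapp : C * B = Matrix.of (fun p q : Fin d × Og =>
          if p.2 = q.2 ∧ p.1 = q.1 then (-1 : ℂ) else 0) := by
        ext ⟨i, e⟩ ⟨k, f⟩
        rw [Matrix.mul_apply, Fintype.sum_prod_type]
        simp only [hBapp, hCapp, Matrix.of_apply, ite_mul, zero_mul, mul_ite, mul_zero,
          Finset.sum_ite_eq, Finset.sum_ite_eq', Finset.mem_univ, if_true,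
          eq_self_iff_true, ite_true]
        by_cases hef : e = f
        · subst hef
          rw [Finset.sum_congr rfl fun j _ => Finset.sum_eq_single e (fun g _ hg => if_neg hg) (fun h => absurd (Finset.mem_univ e) h)]
          simp only [if_pos rfl, true_and, eq_self_iff_true, ite_true]
          have hmm := congrFun (congrFun (hρinv' (α e.val)) i) k
          rw [Matrix.mul_apply] at hmm
          calc ∑ j, -Complex.I * ρ ((α e.val)⁻¹) i j * (-Complex.I * ρ (α e.val) j k)
              = (-Complex.I * -Complex.I) * ∑ j, ρ ((α e.val)⁻¹) i j * ρ (α e.val) j k := by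
                rw [Finset.mul_sum]; exact Finset.sum_congr rfl fun j _ => by ring
            _ = (if i = k then (-1 : ℂ) else 0) := by
                rw [hmm, Matrix.one_apply, neg_mul_neg, Complex.I_mul_I]
                by_cases hik : i = k <;> simp [hik]
        · rw [if_neg (fun hc => hef hc.1)]
          refine Finset.sum_eq_zero fun j _ => Finset.sum_eq_zero fun g _ => ?_
          by_cases h1 : g = f
          · rw [if_pos h1, if_neg (fun h2 => hef (h2.trans h1))]
          · rw [if_neg h1]
      rw [hCBapp]
      ext ⟨i, e⟩ ⟨k, f⟩
      simp only [Matrix.sub_apply, Matrix.smul_apply, Matrix.one_apply, Matrix.of_apply,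
        Prod.mk.injEq, smul_eq_mul]
      by_cases hik : i = k <;> by_cases hef : e = f <;>
        simp [hik, hef, and_comm] <;> ring
    have hcards : Fintype.card (Fin d × Og) = m * d := by
      rw [Fintype.card_prod, Fintype.card_fin, hcardOg]; ring
    calc (1 - P).det = ((1 - P).submatrix ψ ψ).det :=
          (Matrix.det_submatrix_equiv_self ψ (1 - P)).symm
      _ = (Matrix.fromBlocks 1 B C 1).det := by rw [hblocks]
      _ = ((1 : Matrix (Fin d × Og) (Fin d × Og) ℂ) - C * B).det := by
          rw [Matrix.det_fromBlocks_one₁₁]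
      _ = ((2 : ℂ) • (1 : Matrix (Fin d × Og) (Fin d × Og) ℂ)).det := by rw [hCB]
      _ = 2 ^ (m * d) := by
          rw [Matrix.det_smul, Matrix.det_one, mul_one, hcards]
  have hLR : ∀ (i k : Fin d) (e f : A), (L * R) (i, e) (k, f)
      = if o f = t e then ρ (α e) i k * w e * x (t e) * w f else 0 := by
    intro i k e f
    rw [Matrix.mul_apply, Fintype.sum_prod_type]
    simp only [hLapp, hRapp, ite_mul, zero_mul, mul_ite, mul_zero,
      Finset.sum_ite_eq, Finset.sum_ite_eq', Finset.mem_univ, if_true,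
      eq_self_iff_true, ite_true]
    by_cases hof : o f = t e
    · simp [hof]
    · have hof' : ¬ (t e = o f) := fun hc => hof hc.symm
      simp [hof, hof']
  have hSU : ∀ (i k : Fin d) (e f : A), (∑ g : Γ, ρ g ⊗ₖ Ug g) (i, e) (k, f)
      = if t e = o f then
          ρ (α e) i k * ((if f = einv e then Complex.I else 0) - x (t e) * w e * w f)
        else 0 := by
    intro i k e f
    rw [Matrix.sum_apply]
    simp only [Matrix.kroneckerMap_apply, hUg, mul_ite, mul_zero]
    by_cases hte : t e = o f
    · simp only [hte, true_and, eq_self_iff_true, ite_true, Finset.sum_ite_eq,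
        Finset.mem_univ, if_true]
    · simp [hte]
  have hsplit : (1 : Matrix (Fin d × A) (Fin d × A) ℂ) - ∑ g : Γ, ρ g ⊗ₖ Ug g
      = (1 - P) + L * R := by
    ext p q
    obtain ⟨i, e⟩ := p; obtain ⟨k, f⟩ := q
    simp only [Matrix.sub_apply, Matrix.add_apply, hSU, hLR, hPapp]
    by_cases hfe : f = einv e
    · have hof : o f = t e := by rw [hfe, ho]
      rw [if_pos hof.symm, if_pos hof, if_pos hfe, if_pos hfe]
      ring
    · by_cases hof : o f = t e
      · rw [if_pos hof.symm, if_pos hof, if_neg hfe, if_neg hfe]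
        ring
      · have hof' : ¬ (t e = o f) := fun hc => hof hc.symm
        rw [if_neg hof', if_neg hof, if_neg hfe]
        ring
  have hPP : P * P = -1 := by
    ext p q
    obtain ⟨i, e⟩ := p; obtain ⟨k, f⟩ := q
    rw [Matrix.mul_apply, Fintype.sum_prod_type]
    have hterm : ∀ j : Fin d, (∑ g' : A, P (i, e) (j, g') * P (j, g') (k, f))
        = if f = e then Complex.I * ρ (α e) i j * (Complex.I * ρ ((α e)⁻¹) j k) else 0 := by
      intro j
      rw [Finset.sum_eq_single (einv e) (fun g' _ hgne => by
          rw [hPapp, if_neg (fun hc => hgne hc), zero_mul])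
        (fun hmem => absurd (Finset.mem_univ _) hmem)]
      rw [hPapp, hPapp, if_pos rfl]
      simp only [hinvol, hα]
      by_cases hfe : f = e
      · rw [if_pos hfe, if_pos hfe]
      · rw [if_neg hfe, if_neg hfe, mul_zero]
    simp only [hterm]
    by_cases hfe : f = e
    · simp only [hfe, eq_self_iff_true, ite_true]
      have hmm := congrFun (congrFun (hρinv (α e)) i) k
      rw [Matrix.mul_apply] at hmm
      calc (∑ j, Complex.I * ρ (α e) i j * (Complex.I * ρ ((α e)⁻¹) j k))
          = (Complex.I * Complex.I) * ∑ j, ρ (α e) i j * ρ ((α e)⁻¹) j k := by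
            rw [Finset.mul_sum]; exact Finset.sum_congr rfl fun j _ => by ring
        _ = (-1 : Matrix (Fin d × A) (Fin d × A) ℂ) (i, e) (k, e) := by
            rw [hmm, Complex.I_mul_I, Matrix.neg_apply, Matrix.one_apply, Matrix.one_apply]
            by_cases hik : i = k <;> simp [hik, Prod.ext_iff]
    · have hne2 : ¬ ((i, e) = (k, f)) := by
        intro hc; exact hfe (congrArg Prod.snd hc).symm
      rw [Matrix.neg_apply, Matrix.one_apply_ne hne2, neg_zero]
      simp [hfe]
  have h2 : (1 - P) * (1 + P) = (2 : ℂ) • 1 := by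
    have hexpand : (1 - P) * (1 + P) = 1 + P - P - P * P := by noncomm_ring
    rw [hexpand, hPP, sub_neg_eq_add, add_sub_cancel_right, two_smul]
  have hfac : (1 - P) + L * R = (1 - P) * (1 + (((2:ℂ)⁻¹ • (1 + P)) * L) * R) := by
    rw [Matrix.mul_add, Matrix.mul_one]
    congr 1
    rw [← Matrix.mul_assoc, ← Matrix.mul_assoc, Matrix.mul_smul, h2,
      smul_smul, inv_mul_cancel₀ (two_ne_zero), one_smul, Matrix.one_mul]
  have hPL : ∀ (i j : Fin d) (e : A) (u : V), (P * L) (i, e) (j, u)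
      = if o e = u then Complex.I * (if i = j then 1 else 0) * w (einv e) * x u else 0 := by
    intro i j e u
    rw [Matrix.mul_apply, Fintype.sum_prod_type]
    have hterm : ∀ k : Fin d, (∑ g' : A, P (i, e) (k, g') * L (k, g') (j, u))
        = if o e = u then Complex.I * ρ (α e) i k * (ρ ((α e)⁻¹) k j * w (einv e) * x u)
          else 0 := by
      intro k
      rw [Finset.sum_eq_single (einv e) (fun g' _ hgne => by
          rw [hPapp, if_neg (fun hc => hgne hc), zero_mul])
        (fun hmem => absurd (Finset.mem_univ _) hmem)]
      rw [hPapp, hLapp, if_pos rfl]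
      simp only [ht_einv, hα]
      by_cases hoe : o e = u
      · rw [if_pos hoe, if_pos hoe]
      · rw [if_neg hoe, if_neg hoe, mul_zero]
    simp only [hterm]
    by_cases hoe : o e = u
    · simp only [hoe, eq_self_iff_true, ite_true]
      have hmm := congrFun (congrFun (hρinv (α e)) i) j
      rw [Matrix.mul_apply] at hmm
      calc (∑ k, Complex.I * ρ (α e) i k * (ρ ((α e)⁻¹) k j * w (einv e) * x u))
          = (Complex.I * w (einv e) * x u) * ∑ k, ρ (α e) i k * ρ ((α e)⁻¹) k j := by
            rw [Finset.mul_sum]; exact Finset.sum_congr rfl fun k _ => by ring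
        _ = Complex.I * (if i = j then 1 else 0) * w (einv e) * x u := by
            rw [hmm, Matrix.one_apply]; ring
    · simp [hoe]
  have hHgsum : ∀ (j j' : Fin d) (u u' : V), (∑ g : Γ, ρ g j j' * Hg g u u')
      = ∑ f : A, if o f = u ∧ t f = u' then
          ρ (α f) j j' * ((h f : ℂ) * Complex.exp (2 * Complex.I * γ f)) else 0 := by
    intro j j' u u'
    simp only [hHg, Finset.mul_sum, Finset.sum_filter]
    rw [Finset.sum_comm]
    refine Finset.sum_congr rfl fun f _ => ?_
    by_cases h1 : o f = u
    · by_cases h2 : t f = u'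
      · simp [h1, h2, Finset.sum_ite_eq]
      · simp [h1, h2]
    · simp [h1]
  have hGamC : ∀ u : V, ((Gam u : ℂ)) = ∑ f : A, if o f = u then (h f : ℂ) else 0 := by
    intro u
    rw [hGam, Finset.sum_filter]
    push_cast
    exact Finset.sum_congr rfl fun f _ => by split <;> simp
  have hxu : ∀ u : V, (H u u - lam - Complex.I * (Gam u : ℂ)) * (x u / 2) = 1 := by
    intro u
    rw [hx u]
    field_simp
    rw [div_self (hne u)]
  have hRLPL : ∀ (j j' : Fin d) (u u' : V), (R * (L + P * L)) (j, u) (j', u')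
      = x u' * (∑ g : Γ, ρ g j j' * Hg g u u')
        + (if u = u' ∧ j = j' then Complex.I * x u * (Gam u : ℂ) else 0) := by
    intro j j' u u'
    rw [Matrix.mul_apply, Fintype.sum_prod_type]
    have hterm : ∀ (k : Fin d) (f : A), R (j, u) (k, f) * (L + P * L) ((k, f)) (j', u')
        = if j = k then
            (if o f = u then w f else 0) * (L (k, f) (j', u') + (P * L) (k, f) (j', u'))
          else 0 := by
      intro k f
      rw [hRapp, Matrix.add_apply]
      by_cases hjk : j = k
      · rw [if_pos hjk, if_pos hjk]
      · rw [if_neg hjk, if_neg hjk, zero_mul]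
    simp only [hterm, Finset.sum_ite_irrel, Finset.sum_const_zero, Finset.sum_ite_eq,
      Finset.mem_univ, if_true]
    rw [hHgsum, Finset.mul_sum]
    have hδ : (if u = u' ∧ j = j' then Complex.I * x u * (Gam u : ℂ) else 0)
        = ∑ f : A, if u = u' ∧ j = j' then
            (if o f = u then Complex.I * x u * (h f : ℂ) else 0) else 0 := by
      by_cases hc : u = u' ∧ j = j'
      · rw [if_pos hc, hGamC u, Finset.mul_sum]
        refine Finset.sum_congr rfl fun f _ => ?_
        rw [if_pos hc, mul_ite, mul_zero]
      · rw [if_neg hc]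
        refine (Finset.sum_eq_zero fun f _ => by rw [if_neg hc]).symm
    rw [hδ, ← Finset.sum_add_distrib]
    refine Finset.sum_congr rfl fun f _ => ?_
    rw [hLapp, hPL]
    by_cases hofu : o f = u
    · rw [if_pos hofu]
      by_cases htf : t f = u'
      · by_cases huu : u = u'
        · exact absurd (hofu.trans (huu.trans htf.symm)) (hloop f)
        · rw [if_pos htf,
            if_neg (show ¬ o f = u' from fun hc => huu (hofu.symm.trans hc)),
            if_pos (show o f = u ∧ t f = u' from ⟨hofu, htf⟩),
            if_neg (show ¬ (u = u' ∧ j = j') from fun hc => huu hc.1),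
            add_zero, add_zero]
          linear_combination (x u' * ρ (α f) j j') * hww2 f
      · by_cases huu : u = u'
        · rw [if_neg htf, if_pos (show o f = u' from hofu.trans huu),
            if_neg (show ¬ (o f = u ∧ t f = u') from fun hc => htf hc.2),
            zero_add, mul_zero, zero_add]
          by_cases hjj : j = j'
          · rw [if_pos hjj, if_pos (show u = u' ∧ j = j' from ⟨huu, hjj⟩), if_pos hofu,
              ← huu]
            linear_combination (Complex.I * x u) * hww f
          · rw [if_neg hjj, if_neg (show ¬ (u = u' ∧ j = j') from fun hc => hjj hc.2)]
            ring
        · rw [if_neg htf,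
            if_neg (show ¬ o f = u' from fun hc => huu (hofu.symm.trans hc)),
            if_neg (show ¬ (o f = u ∧ t f = u') from fun hc => htf hc.2),
            if_neg (show ¬ (u = u' ∧ j = j') from fun hc => huu hc.1)]
          ring
    · rw [if_neg hofu,
        if_neg (show ¬ (o f = u ∧ t f = u') from fun hc => hofu hc.1)]
      by_cases hc6 : u = u' ∧ j = j'
      · rw [if_pos hc6, if_neg hofu]
        ring
      · rw [if_neg hc6]
        ring
  have hinner : (1 : Matrix (Fin d × V) (Fin d × V) ℂ) + R * (((2:ℂ)⁻¹ • (1 + P)) * L)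
      = ((-1 : ℂ) • (lam • (1 : Matrix (Fin d × V) (Fin d × V) ℂ) -
          (∑ g : Γ, ρ g ⊗ₖ Hg g) -
          (1 : Matrix (Fin d) (Fin d) ℂ) ⊗ₖ Matrix.diagonal (fun u => H u u))) *
        Matrix.diagonal (fun p : Fin d × V => x p.2 / 2) := by
    have hsmul : ((2:ℂ)⁻¹ • (1 + P)) * L = (2:ℂ)⁻¹ • (L + P * L) := by
      rw [Matrix.smul_mul, Matrix.add_mul, Matrix.one_mul]
    rw [hsmul, Matrix.mul_smul]
    ext p q
    obtain ⟨j, u⟩ := p; obtain ⟨j', u'⟩ := q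
    rw [Matrix.add_apply, Matrix.smul_apply, hRLPL, Matrix.mul_diagonal, Matrix.smul_apply,
      Matrix.sub_apply, Matrix.sub_apply, Matrix.smul_apply, Matrix.kroneckerMap_apply,
      Matrix.sum_apply]
    simp only [Matrix.kroneckerMap_apply, Matrix.one_apply, Matrix.diagonal_apply,
      smul_eq_mul, Prod.mk.injEq]
    by_cases huu : u = u'
    · by_cases hjj : j = j'
      · subst huu; subst hjj
        simp only [eq_self_iff_true, if_true, and_self, ite_true]
        have hx1 := hxu u
        linear_combination -hx1
      · have h3 : ¬ ((j = j') ∧ (u = u')) := fun hc => hjj hc.1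
        simp [huu, hjj, h3]
        ring
    · have h1 : ¬ ((j = j') ∧ (u = u')) := fun hc => huu hc.2
      have h2 : ¬ ((u = u') ∧ (j = j')) := fun hc => huu hc.1
      simp [huu, h1, h2]
      ring
  rw [hsplit, hfac, Matrix.det_mul, hdetP, Matrix.det_one_add_mul_comm, hinner,
    Matrix.det_mul, Matrix.det_smul, Matrix.det_diagonal]
  have hprod : (∏ p : Fin d × V, x p.2 / 2)
      = ((∏ u : V, (H u u - lam - Complex.I * Gam u)) ^ d)⁻¹ := by
    rw [Fintype.prod_prod_type]
    have : ∀ u, x u / 2 = (H u u - lam - Complex.I * Gam u)⁻¹ := by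
      intro u; rw [hx u, div_right_comm, div_self (two_ne_zero), one_div]
    simp only [this]
    rw [Finset.prod_inv_distrib, Finset.prod_const, Finset.card_univ, Fintype.card_fin,
      inv_pow]
  rw [hprod]
  have hcard : Fintype.card (Fin d × V) = n * d := by
    rw [Fintype.card_prod, Fintype.card_fin, hn]; ring
  rw [hcard]
  ring
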